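/- Let q⁽¹⁾, q⁽²⁾ be Q-matrices on ℕ and let P⁽¹⁾, P⁽²⁾ be substochastic transition functions satisfying the backward integral equations for q⁽¹⁾ and q⁽²⁾ respectively. If condition (1.1) holds for P⁽¹⁾, P⁽²⁾, then condition (1.2) holds for q⁽¹⁾, q⁽²⁾. -/

import Mathlib

open scoped BigOperators
open Filter Topology

/-- Row `i` of `q` with the diagonal entry replaced by `0`
(used to form sums over the off-diagonal entries). -/
noncomputable def offDiag (q : ℕ → ℕ → ℝ) (i j : ℕ) : ℝ :=
  if j = i then 0 else q i j

/-- `q` is a (totally stable) Q-matrix on `ℕ`: nonnegative off-diagonal entries,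
nonpositive diagonal, and each row is summable off the diagonal with
`∑_{j ≠ i} q i j ≤ qᵢ := -q i i`. -/
def IsQMatrix (q : ℕ → ℕ → ℝ) : Prop :=
  (∀ i j, i ≠ j → 0 ≤ q i j) ∧
  (∀ i, q i i ≤ 0) ∧
  (∀ i, Summable (fun j => offDiag q i j)) ∧
  (∀ i, (∑' j, offDiag q i j) ≤ - q i i)

/-- A Q-matrix is conservative if each row sums to `0`:
`∑_{j ≠ i} q i j = qᵢ = -q i i`. -/
def IsConservative (q : ℕ → ℕ → ℝ) : Prop :=
  ∀ i, (∑' j, offDiag q i j) = - q i i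

/-- A Q-matrix is bounded if `sup_i qᵢ < ∞`. -/
def IsBoundedQ (q : ℕ → ℕ → ℝ) : Prop :=
  ∃ C : ℝ, ∀ i, - q i i ≤ C

/-- A substochastic transition function on `[0,∞)` (parametrized by `t : ℝ`,
with all conditions imposed for `t ≥ 0`). -/
def IsTransitionFunction (P : ℝ → ℕ → ℕ → ℝ) : Prop :=
  (∀ t i j, 0 ≤ t → 0 ≤ P t i j) ∧
  (∀ t i, 0 ≤ t → Summable (fun j => P t i j)) ∧
  (∀ t i, 0 ≤ t → (∑' j, P t i j) ≤ 1) ∧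
  (∀ i j, P 0 i j = if i = j then 1 else 0) ∧
  (∀ t s i j, 0 ≤ t → 0 ≤ s → P (t + s) i j = ∑' k, P t i k * P s k j)

/-- `P` satisfies the backward integral equation for the Q-matrix `q`:
`P t i j = δ_{ij} e^{-qᵢ t} + ∫_0^t e^{-qᵢ (t-s)} ∑_{k ≠ i} q i k P s k j ds`
(here `-qᵢ = q i i`). -/
def BackwardEq (q : ℕ → ℕ → ℝ) (P : ℝ → ℕ → ℕ → ℝ) : Prop :=
  ∀ t i j, 0 ≤ t →
    P t i j = (if i = j then 1 else 0) * Real.exp (q i i * t) +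
      ∫ s in (0:ℝ)..t,
        Real.exp (q i i * (t - s)) * (∑' k, if k = i then 0 else q i k * P s k j)

/-- `P` is the minimal Q-process for `q`: a substochastic transition function
satisfying the backward integral equation for `q`, which is pointwise below any
other such transition function. -/
def IsMinimalQProcess (q : ℕ → ℕ → ℝ) (P : ℝ → ℕ → ℕ → ℝ) : Prop :=
  IsTransitionFunction P ∧ BackwardEq q P ∧
  ∀ P', IsTransitionFunction P' → BackwardEq q P' →
    ∀ t i j, 0 ≤ t → P t i j ≤ P' t i j

/-- `q` is regular (`IsRegularQ` to avoid a name clash with Mathlib): conservative, and the minimal Q-process is honest (stochastic). -/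
def IsRegularQ (q : ℕ → ℕ → ℝ) : Prop :=
  IsConservative q ∧
  ∀ P, IsMinimalQProcess q P → ∀ t, 0 ≤ t → ∀ i, (∑' j, P t i j) = 1

/-- The tail sum `∑_{j ≥ k} f j`. -/
noncomputable def tailSum (f : ℕ → ℝ) (k : ℕ) : ℝ :=
  ∑' j, if k ≤ j then f j else 0

/-- Condition (1.1): stochastic comparability of `P1` and `P2`. -/
def Cond11 (P1 P2 : ℝ → ℕ → ℕ → ℝ) : Prop :=
  ∀ t, 0 ≤ t → ∀ k i m, i ≤ m → tailSum (P1 t i) k ≤ tailSum (P2 t m) k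

/-- Condition (1.2) for the Q-matrices `q1`, `q2`. -/
def Cond12 (q1 q2 : ℕ → ℕ → ℝ) : Prop :=
  ∀ i m, i ≤ m → ∀ k, (k ≤ i ∨ m + 1 ≤ k) →
    tailSum (q1 i) k ≤ tailSum (q2 m) k

/-- Condition (1.3) for the Q-matrices `q1`, `q2` (the conservative reduction
of (1.2)). -/
def Cond13 (q1 q2 : ℕ → ℕ → ℝ) : Prop :=
  ∀ i m, i ≤ m →
    (∀ k, m + 1 ≤ k → tailSum (q1 i) k ≤ tailSum (q2 m) k) ∧
    (∀ k, k + 1 ≤ i →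
      (∑ j ∈ Finset.range (k + 1), q2 m j) ≤ ∑ j ∈ Finset.range (k + 1), q1 i j)

section Helpers

open MeasureTheory

variable {q : ℕ → ℕ → ℝ} {P : ℝ → ℕ → ℕ → ℝ}

lemma summable_tail_ite {f : ℕ → ℝ} (hf : Summable f) (hnn : ∀ j, 0 ≤ f j) (k : ℕ) :
    Summable (fun j => if k ≤ j then f j else 0) :=
  Summable.of_nonneg_of_le (fun j => by by_cases h : k ≤ j <;> simp [h, hnn j])
    (fun j => by by_cases h : k ≤ j <;> simp [h, hnn j]) hf

lemma tailSum_nonneg {f : ℕ → ℝ} (hnn : ∀ j, 0 ≤ f j) (k : ℕ) : 0 ≤ tailSum f k :=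
  tsum_nonneg fun j => by by_cases h : k ≤ j <;> simp [h, hnn j]

lemma tailSum_le_tsum {f : ℕ → ℝ} (hf : Summable f) (hnn : ∀ j, 0 ≤ f j) (k : ℕ) :
    tailSum f k ≤ ∑' j, f j :=
  Summable.tsum_le_tsum (fun j => by by_cases h : k ≤ j <;> simp [h, hnn j])
    (summable_tail_ite hf hnn k) hf

lemma tailSum_eq_add {f : ℕ → ℝ} (hf : Summable f) (hnn : ∀ j, 0 ≤ f j) (k : ℕ) :
    tailSum f k = f k + tailSum f (k + 1) := by
  have h1 : Summable (fun j => if k + 1 ≤ j then f j else 0) := summable_tail_ite hf hnn _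
  have h2 : Summable (fun j : ℕ => if j = k then f k else 0) := (hasSum_ite_eq k (f k)).summable
  have hpt : ∀ j, (if k ≤ j then f j else 0) =
      (if j = k then f k else 0) + (if k + 1 ≤ j then f j else 0) := by
    intro j
    rcases lt_trichotomy j k with h | h | h
    · rw [if_neg (by omega), if_neg (by omega), if_neg (by omega), add_zero]
    · subst h; rw [if_pos le_rfl, if_pos rfl, if_neg (by omega), add_zero]
    · rw [if_pos (by omega), if_neg (by omega), if_pos (by omega), zero_add]
  rw [tailSum, tsum_congr hpt, Summable.tsum_add h2 h1, tsum_ite_eq, tailSum]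

lemma P_le_one (hP : IsTransitionFunction P) {t : ℝ} (ht : 0 ≤ t) (i j : ℕ) : P t i j ≤ 1 :=
  le_trans (Summable.le_tsum (hP.2.1 t i ht) j fun b _ => hP.1 t i b ht) (hP.2.2.1 t i ht)

lemma tailSum_P_le_one (hP : IsTransitionFunction P) {t : ℝ} (ht : 0 ≤ t) (i k : ℕ) :
    tailSum (P t i) k ≤ 1 :=
  le_trans (tailSum_le_tsum (hP.2.1 t i ht) (fun j => hP.1 t i j ht) k) (hP.2.2.1 t i ht)

lemma tailSum_P_nonneg (hP : IsTransitionFunction P) {t : ℝ} (ht : 0 ≤ t) (i k : ℕ) :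
    0 ≤ tailSum (P t i) k :=
  tailSum_nonneg (fun j => hP.1 t i j ht) k

lemma offDiag_nonneg (hq : IsQMatrix q) (i l : ℕ) : 0 ≤ offDiag q i l := by
  unfold offDiag
  split
  · exact le_rfl
  · exact hq.1 i l fun h => ‹¬ l = i› h.symm

lemma exp_le_diag (hq : IsQMatrix q) (hP : IsTransitionFunction P) (hB : BackwardEq q P)
    {s : ℝ} (hs : 0 ≤ s) (l : ℕ) : Real.exp (q l l * s) ≤ P s l l := by
  have h := hB s l l hs
  rw [if_pos rfl, one_mul] at h
  have hnn : 0 ≤ ∫ u in (0:ℝ)..s,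
      Real.exp (q l l * (s - u)) * (∑' k, if k = l then 0 else q l k * P u k l) := by
    apply intervalIntegral.integral_nonneg hs
    intro u hu
    apply mul_nonneg (Real.exp_pos _).le
    apply tsum_nonneg
    intro k
    by_cases hk : k = l
    · simp [hk]
    · rw [if_neg hk]
      exact mul_nonneg (hq.1 l k fun h' => hk h'.symm) (hP.1 u k l hu.1)
  linarith

lemma one_sub_diag (hq : IsQMatrix q) (hP : IsTransitionFunction P) (hB : BackwardEq q P)
    {s : ℝ} (hs : 0 ≤ s) (l : ℕ) : 1 - P s l l ≤ (-q l l) * s := by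
  have h1 := exp_le_diag hq hP hB hs l
  have h2 : q l l * s + 1 ≤ Real.exp (q l l * s) := Real.add_one_le_exp _
  linarith

end Helpers

section Helpers2

open MeasureTheory

variable {q : ℕ → ℕ → ℝ} {P : ℝ → ℕ → ℕ → ℝ}

lemma tail_ck (hP : IsTransitionFunction P) {s h : ℝ} (hs : 0 ≤ s) (hh : 0 ≤ h) (l k : ℕ) :
    tailSum (P (h + s) l) k = ∑' u, P h l u * tailSum (P s u) k := by
  have hrow : ∀ u, Summable (fun j => P h l u * (if k ≤ j then P s u j else 0)) := fun u =>
    (summable_tail_ite (hP.2.1 s u hs) (fun j => hP.1 s u j hs) k).mul_left _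
  have hsum : Summable (Function.uncurry fun u j => P h l u * (if k ≤ j then P s u j else 0)) := by
    rw [summable_prod_of_nonneg]
    · constructor
      · exact fun u => hrow u
      · apply Summable.of_nonneg_of_le (fun u => tsum_nonneg fun j => by
            by_cases hj : k ≤ j <;>
              simp [hj, mul_nonneg (hP.1 h l u hh) (hP.1 s u j hs)])
          (fun u => ?_) (hP.2.1 h l hh)
        calc (∑' j, P h l u * (if k ≤ j then P s u j else 0))
            = P h l u * tailSum (P s u) k := tsum_mul_left
          _ ≤ P h l u * 1 := mul_le_mul_of_nonneg_left
              (tailSum_P_le_one hP hs u k) (hP.1 h l u hh)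
          _ = P h l u := mul_one _
    · intro p
      exact mul_nonneg (hP.1 h l p.1 hh) (by by_cases hj : k ≤ p.2 <;> simp [hj, hP.1 s p.1 p.2 hs])
  calc tailSum (P (h + s) l) k
      = ∑' j, if k ≤ j then (∑' u, P h l u * P s u j) else 0 :=
        tsum_congr fun j => by rw [hP.2.2.2.2 h s l j hh hs]
    _ = ∑' j, ∑' u, P h l u * (if k ≤ j then P s u j else 0) := by
        refine tsum_congr fun j => ?_
        by_cases hj : k ≤ j
        · simp only [if_pos hj]
        · simp only [if_neg hj, mul_zero, tsum_zero]
    _ = ∑' u, ∑' j, P h l u * (if k ≤ j then P s u j else 0) := Summable.tsum_comm hsum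
    _ = ∑' u, P h l u * tailSum (P s u) k := tsum_congr fun u => tsum_mul_left

lemma tail_lip (hq : IsQMatrix q) (hP : IsTransitionFunction P) (hB : BackwardEq q P)
    {s h : ℝ} (hs : 0 ≤ s) (hh : 0 ≤ h) (l k : ℕ) :
    |tailSum (P (s + h) l) k - tailSum (P s l) k| ≤ (-q l l) * h := by
  rw [add_comm s h, tail_ck hP hs hh l k]
  have hTnn : ∀ u, 0 ≤ tailSum (P s u) k := fun u => tailSum_P_nonneg hP hs u k
  have hT1 : ∀ u, tailSum (P s u) k ≤ 1 := fun u => tailSum_P_le_one hP hs u k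
  have hsum : Summable (fun u => P h l u * tailSum (P s u) k) := by
    apply Summable.of_nonneg_of_le (fun u => mul_nonneg (hP.1 h l u hh) (hTnn u))
      (fun u => ?_) (hP.2.1 h l hh)
    calc P h l u * tailSum (P s u) k ≤ P h l u * 1 :=
          mul_le_mul_of_nonneg_left (hT1 u) (hP.1 h l u hh)
      _ = P h l u := mul_one _
  rw [Summable.tsum_eq_add_tsum_ite hsum l]
  set R := ∑' u, if u = l then 0 else P h l u * tailSum (P s u) k with hR
  have hRsummable : Summable (fun u => if u = l then 0 else P h l u * tailSum (P s u) k) := by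
    apply Summable.of_nonneg_of_le
      (fun u => by by_cases hu : u = l <;> simp [hu, mul_nonneg (hP.1 h l u hh) (hTnn u)])
      (fun u => ?_) (hP.2.1 h l hh)
    by_cases hu : u = l
    · rw [if_pos hu, hu]; exact hP.1 h l l hh
    · rw [if_neg hu]
      calc P h l u * tailSum (P s u) k ≤ P h l u * 1 :=
            mul_le_mul_of_nonneg_left (hT1 u) (hP.1 h l u hh)
        _ = P h l u := mul_one _
  have hR0 : 0 ≤ R := tsum_nonneg fun u => by
    by_cases hu : u = l <;> simp [hu, mul_nonneg (hP.1 h l u hh) (hTnn u)]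
  have hitesum : Summable (fun u => if u = l then 0 else P h l u) := by
    apply Summable.of_nonneg_of_le (fun u => ?_) (fun u => ?_) (hP.2.1 h l hh)
    · by_cases hu : u = l
      · simp [hu]
      · rw [if_neg hu]; exact hP.1 h l u hh
    · by_cases hu : u = l
      · rw [if_pos hu, hu]; exact hP.1 h l l hh
      · rw [if_neg hu]
  have hR1 : R ≤ ∑' u, if u = l then 0 else P h l u := by
    apply Summable.tsum_le_tsum ?_ hRsummable hitesum
    intro u
    by_cases hu : u = l
    · simp [hu]
    · rw [if_neg hu, if_neg hu]
      calc P h l u * tailSum (P s u) k ≤ P h l u * 1 :=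
            mul_le_mul_of_nonneg_left (hT1 u) (hP.1 h l u hh)
        _ = P h l u := mul_one _
  have hR2 : (∑' u, if u = l then 0 else P h l u) = (∑' u, P h l u) - P h l l := by
    rw [Summable.tsum_eq_add_tsum_ite (hP.2.1 h l hh) l]; ring
  have hR3 : R ≤ 1 - P h l l := by
    rw [hR2] at hR1
    have := hP.2.2.1 h l hh
    linarith
  have hd : 1 - P h l l ≤ (-q l l) * h := one_sub_diag hq hP hB hh l
  have ha0 : 0 ≤ P h l l := hP.1 h l l hh
  have ha1 : P h l l ≤ 1 := P_le_one hP hh l l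
  have hx0 := hTnn l
  have hx1 := hT1 l
  rw [abs_le]
  constructor <;> nlinarith [mul_le_mul_of_nonneg_left hx1 (by linarith : (0:ℝ) ≤ 1 - P h l l),
    mul_nonneg (by linarith : (0:ℝ) ≤ 1 - P h l l) hx0]

lemma tail_contOn (hq : IsQMatrix q) (hP : IsTransitionFunction P) (hB : BackwardEq q P)
    (l k : ℕ) : ContinuousOn (fun s => tailSum (P s l) k) (Set.Ici (0:ℝ)) := by
  have hlip : LipschitzOnWith (Real.toNNReal (-q l l)) (fun s => tailSum (P s l) k)
      (Set.Ici (0:ℝ)) := by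
    apply LipschitzOnWith.of_dist_le_mul
    intro x hx y hy
    have hql : 0 ≤ -q l l := neg_nonneg.mpr (hq.2.1 l)
    rw [Real.coe_toNNReal _ hql, Real.dist_eq, Real.dist_eq]
    rcases le_total x y with hxy | hxy
    · have h := tail_lip hq hP hB (s := x) (h := y - x) hx (by linarith) l k
      rw [show x + (y - x) = y by ring] at h
      rw [abs_sub_comm]
      calc |tailSum (P y l) k - tailSum (P x l) k| ≤ (-q l l) * (y - x) := h
        _ = (-q l l) * |x - y| := by rw [abs_sub_comm, abs_of_nonneg (by linarith)]
    · have h := tail_lip hq hP hB (s := y) (h := x - y) hy (by linarith) l k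
      rw [show y + (x - y) = x by ring] at h
      calc |tailSum (P x l) k - tailSum (P y l) k| ≤ (-q l l) * (x - y) := h
        _ = (-q l l) * |x - y| := by rw [abs_of_nonneg (by linarith)]
  exact hlip.continuousOn

end Helpers2

section Helpers3

open MeasureTheory

variable {q : ℕ → ℕ → ℝ} {P : ℝ → ℕ → ℕ → ℝ}

lemma P_contOn (hq : IsQMatrix q) (hP : IsTransitionFunction P) (hB : BackwardEq q P)
    (l j : ℕ) : ContinuousOn (fun s => P s l j) (Set.Ici (0:ℝ)) := by
  apply ContinuousOn.congr ((tail_contOn hq hP hB l j).sub (tail_contOn hq hP hB l (j+1)))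
  intro s hs
  have h := tailSum_eq_add (hP.2.1 s l hs) (fun u => hP.1 s l u hs) j
  simp only [Pi.sub_apply]
  linarith

noncomputable def Gfun (q : ℕ → ℕ → ℝ) (P : ℝ → ℕ → ℕ → ℝ) (i k : ℕ) : ℝ → ℝ :=
  fun s => ∑' l, offDiag q i l * tailSum (P s l) k

lemma Gsummand_summable (hq : IsQMatrix q) (hP : IsTransitionFunction P)
    {s : ℝ} (hs : 0 ≤ s) (i k : ℕ) :
    Summable (fun l => offDiag q i l * tailSum (P s l) k) := by
  apply Summable.of_nonneg_of_le
    (fun l => mul_nonneg (offDiag_nonneg hq i l) (tailSum_P_nonneg hP hs l k))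
    (fun l => ?_) (hq.2.2.1 i)
  calc offDiag q i l * tailSum (P s l) k ≤ offDiag q i l * 1 :=
        mul_le_mul_of_nonneg_left (tailSum_P_le_one hP hs l k) (offDiag_nonneg hq i l)
    _ = offDiag q i l := mul_one _

lemma G_nonneg (hq : IsQMatrix q) (hP : IsTransitionFunction P) {s : ℝ} (hs : 0 ≤ s)
    (i k : ℕ) : 0 ≤ Gfun q P i k s :=
  tsum_nonneg fun l => mul_nonneg (offDiag_nonneg hq i l) (tailSum_P_nonneg hP hs l k)

lemma G_le (hq : IsQMatrix q) (hP : IsTransitionFunction P) {s : ℝ} (hs : 0 ≤ s)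
    (i k : ℕ) : Gfun q P i k s ≤ -q i i := by
  refine le_trans (Summable.tsum_le_tsum (fun l => ?_) (Gsummand_summable hq hP hs i k) (hq.2.2.1 i))
    (hq.2.2.2 i)
  calc offDiag q i l * tailSum (P s l) k ≤ offDiag q i l * 1 :=
        mul_le_mul_of_nonneg_left (tailSum_P_le_one hP hs l k) (offDiag_nonneg hq i l)
    _ = offDiag q i l := mul_one _

lemma G_contOn (hq : IsQMatrix q) (hP : IsTransitionFunction P) (hB : BackwardEq q P)
    (i k : ℕ) : ContinuousOn (Gfun q P i k) (Set.Ici (0:ℝ)) := by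
  apply continuousOn_tsum (fun l => continuousOn_const.mul (tail_contOn hq hP hB l k))
    (hq.2.2.1 i)
  intro l s hs
  simp only [Pi.mul_apply]
  rw [Real.norm_eq_abs, abs_mul, abs_of_nonneg (offDiag_nonneg hq i l)]
  calc offDiag q i l * |tailSum (P s l) k| ≤ offDiag q i l * 1 := by
        apply mul_le_mul_of_nonneg_left _ (offDiag_nonneg hq i l)
        rw [abs_of_nonneg (tailSum_P_nonneg hP hs l k)]
        exact tailSum_P_le_one hP hs l k
    _ = offDiag q i l := mul_one _

lemma tail_zero (hP : IsTransitionFunction P) (l k : ℕ) :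
    tailSum (P 0 l) k = if k ≤ l then (1:ℝ) else 0 := by
  have hpt : ∀ j, (if k ≤ j then P 0 l j else 0) =
      (if j = l then (if k ≤ l then (1:ℝ) else 0) else 0) := by
    intro j
    rw [hP.2.2.2.1 l j]
    by_cases hj : j = l
    · subst hj; simp
    · have hlj : ¬ l = j := fun h => hj h.symm
      by_cases hk : k ≤ j <;> simp [hj, hk, hlj]
  rw [tailSum, tsum_congr hpt, tsum_ite_eq]

lemma G_zero (hq : IsQMatrix q) (hP : IsTransitionFunction P) (i k : ℕ) :
    Gfun q P i k 0 = ∑' l, offDiag q i l * (if k ≤ l then (1:ℝ) else 0) := by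
  exact tsum_congr fun l => by rw [tail_zero hP l k]

lemma tailSum_q (hq : IsQMatrix q) (i k : ℕ) :
    tailSum (q i) k = (if k ≤ i then (1:ℝ) else 0) * q i i +
      ∑' l, offDiag q i l * (if k ≤ l then (1:ℝ) else 0) := by
  have h1 : Summable (fun l => offDiag q i l * (if k ≤ l then (1:ℝ) else 0)) := by
    apply Summable.of_nonneg_of_le (fun l => ?_) (fun l => ?_) (hq.2.2.1 i)
    · by_cases hk : k ≤ l <;> simp [hk, offDiag_nonneg hq i l]
    · by_cases hk : k ≤ l <;> simp [hk, offDiag_nonneg hq i l]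
  have h2 : Summable (fun j : ℕ => if j = i then (if k ≤ i then (1:ℝ) else 0) * q i i else 0) :=
    (hasSum_ite_eq i _).summable
  have hpt : ∀ j, (if k ≤ j then q i j else 0) =
      (if j = i then (if k ≤ i then (1:ℝ) else 0) * q i i else 0) +
        offDiag q i j * (if k ≤ j then (1:ℝ) else 0) := by
    intro j
    by_cases hj : j = i
    · subst hj
      by_cases hk : k ≤ j <;> simp [hk, offDiag]
    · simp only [if_neg hj, zero_add, offDiag, if_neg hj]
      by_cases hk : k ≤ j <;> simp [hk]
  rw [tailSum, tsum_congr hpt, Summable.tsum_add h2 h1, tsum_ite_eq]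

end Helpers3

section Helpers4

open MeasureTheory
open scoped ENNReal NNReal

variable {q : ℕ → ℕ → ℝ} {P : ℝ → ℕ → ℕ → ℝ}

lemma hfun_contOn (hq : IsQMatrix q) (hP : IsTransitionFunction P) (hB : BackwardEq q P)
    (i j : ℕ) : ContinuousOn (fun s => ∑' l, offDiag q i l * P s l j) (Set.Ici (0:ℝ)) := by
  apply continuousOn_tsum (fun l => continuousOn_const.mul (P_contOn hq hP hB l j)) (hq.2.2.1 i)
  intro l s hs
  simp only [Pi.mul_apply]
  rw [Real.norm_eq_abs, abs_mul, abs_of_nonneg (offDiag_nonneg hq i l)]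
  calc offDiag q i l * |P s l j| ≤ offDiag q i l * 1 := by
        apply mul_le_mul_of_nonneg_left _ (offDiag_nonneg hq i l)
        rw [abs_of_nonneg (hP.1 s l j hs)]
        exact P_le_one hP hs l j
    _ = offDiag q i l := mul_one _

lemma swap_rows_summable (hq : IsQMatrix q) (hP : IsTransitionFunction P)
    {s : ℝ} (hs : 0 ≤ s) (i k : ℕ) (l : ℕ) :
    Summable (fun j => offDiag q i l * (if k ≤ j then P s l j else 0)) :=
  (summable_tail_ite (hP.2.1 s l hs) (fun j => hP.1 s l j hs) k).mul_left _

lemma swap_uncurry_summable (hq : IsQMatrix q) (hP : IsTransitionFunction P)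
    {s : ℝ} (hs : 0 ≤ s) (i k : ℕ) :
    Summable (Function.uncurry fun l j => offDiag q i l * (if k ≤ j then P s l j else 0)) := by
  rw [summable_prod_of_nonneg]
  · refine ⟨fun l => swap_rows_summable hq hP hs i k l, ?_⟩
    exact (Gsummand_summable hq hP hs i k).congr (fun l => (tsum_mul_left).symm)
  · intro p
    refine mul_nonneg (offDiag_nonneg hq i p.1) ?_
    by_cases hj : k ≤ p.2 <;> simp [hj, hP.1 s p.1 p.2 hs]

lemma col_summable (hq : IsQMatrix q) (hP : IsTransitionFunction P)
    {s : ℝ} (hs : 0 ≤ s) (i k j : ℕ) :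
    Summable (fun l => offDiag q i l * (if k ≤ j then P s l j else 0)) := by
  by_cases hj : k ≤ j
  · simp only [if_pos hj]
    apply Summable.of_nonneg_of_le
      (fun l => mul_nonneg (offDiag_nonneg hq i l) (hP.1 s l j hs))
      (fun l => ?_) (hq.2.2.1 i)
    calc offDiag q i l * P s l j ≤ offDiag q i l * 1 :=
          mul_le_mul_of_nonneg_left (P_le_one hP hs l j) (offDiag_nonneg hq i l)
      _ = offDiag q i l := mul_one _
  · simp only [if_neg hj, mul_zero]
    exact summable_zero

lemma swap_eq (hq : IsQMatrix q) (hP : IsTransitionFunction P) {s : ℝ} (hs : 0 ≤ s)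
    (i k : ℕ) :
    (∑' j, if k ≤ j then (∑' l, offDiag q i l * P s l j) else 0) = Gfun q P i k s := by
  calc (∑' j, if k ≤ j then (∑' l, offDiag q i l * P s l j) else 0)
      = ∑' j, ∑' l, offDiag q i l * (if k ≤ j then P s l j else 0) := by
        refine tsum_congr fun j => ?_
        by_cases hj : k ≤ j
        · simp only [if_pos hj]
        · simp only [if_neg hj, mul_zero, tsum_zero]
    _ = ∑' l, ∑' j, offDiag q i l * (if k ≤ j then P s l j else 0) :=
        Summable.tsum_comm (swap_uncurry_summable hq hP hs i k)
    _ = Gfun q P i k s := tsum_congr fun l => tsum_mul_left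

set_option maxHeartbeats 1000000 in
lemma tail_ident (hq : IsQMatrix q) (hP : IsTransitionFunction P) (hB : BackwardEq q P)
    (i k : ℕ) {t : ℝ} (ht : 0 ≤ t) :
    tailSum (P t i) k = (if k ≤ i then (1:ℝ) else 0) * Real.exp (q i i * t) +
      ∫ s in Set.Ioc (0:ℝ) t, Real.exp (q i i * (t - s)) * Gfun q P i k s := by
  classical
  have ha : q i i ≤ 0 := hq.2.1 i
  have step0 : ∀ (s : ℝ) (j : ℕ), (∑' l, if l = i then 0 else q i l * P s l j)
      = ∑' l, offDiag q i l * P s l j := by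
    intro s j
    refine tsum_congr fun l => ?_
    unfold offDiag
    split <;> simp
  obtain ⟨F, hF⟩ : ∃ F : ℕ → ℝ → ℝ, F = fun j s => (if k ≤ j then (1:ℝ) else 0) *
      (Real.exp (q i i * (t - s)) * (∑' l, offDiag q i l * P s l j)) := ⟨_, rfl⟩
  have hFval : ∀ j s, F j s = (if k ≤ j then (1:ℝ) else 0) *
      (Real.exp (q i i * (t - s)) * (∑' l, offDiag q i l * P s l j)) := by
    intro j s; rw [hF]
  have hFmeas : ∀ j, AEStronglyMeasurable (F j) (volume.restrict (Set.Ioc 0 t)) := by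
    intro j
    rw [hF]
    apply ContinuousOn.aestronglyMeasurable _ measurableSet_Ioc
    apply ContinuousOn.mono _ (Set.Ioc_subset_Icc_self.trans Set.Icc_subset_Ici_self)
    exact continuousOn_const.mul (((Real.continuous_exp.comp
      (continuous_const.mul (continuous_const.sub continuous_id))).continuousOn).mul
      (hfun_contOn hq hP hB i j))
  have hFnonneg : ∀ (j : ℕ) (s : ℝ), 0 ≤ s → 0 ≤ F j s := by
    intro j s hs
    rw [hFval]
    refine mul_nonneg (by positivity) (mul_nonneg (Real.exp_pos _).le (tsum_nonneg fun l =>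
      mul_nonneg (offDiag_nonneg hq i l) (hP.1 s l j hs)))
  have hpt1 : ∀ (j : ℕ) (s : ℝ),
      (if k ≤ j then (1:ℝ) else 0) * (∑' l, offDiag q i l * P s l j)
        = ∑' l, offDiag q i l * (if k ≤ j then P s l j else 0) := by
    intro j s
    by_cases hj : k ≤ j <;> simp [hj]
  have hbound : ∀ s ∈ Set.Ioc (0:ℝ) t,
      (∑' j, ((‖F j s‖₊ : ℝ≥0∞))) ≤ ENNReal.ofReal (-q i i) := by
    intro s hs
    have hs0 : 0 ≤ s := hs.1.le
    have hE1 : Real.exp (q i i * (t - s)) ≤ 1 := by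
      rw [Real.exp_le_one_iff]
      exact mul_nonpos_of_nonpos_of_nonneg ha (by linarith [hs.2])
    calc (∑' j, ((‖F j s‖₊ : ℝ≥0∞)))
        ≤ ∑' j, ∑' l, ENNReal.ofReal (offDiag q i l * (if k ≤ j then P s l j else 0)) := by
          refine ENNReal.tsum_le_tsum fun j => ?_
          rw [show ((‖F j s‖₊ : ℝ≥0∞)) = ENNReal.ofReal (F j s) from Real.enorm_eq_ofReal (hFnonneg j s hs0)]
          have h2 : F j s ≤ ∑' l, offDiag q i l * (if k ≤ j then P s l j else 0) := by
            rw [← hpt1 j s, hFval]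
            refine mul_le_mul_of_nonneg_left ?_ (by positivity)
            refine mul_le_of_le_one_left (tsum_nonneg fun l =>
              mul_nonneg (offDiag_nonneg hq i l) (hP.1 s l j hs0)) hE1
          refine le_trans (ENNReal.ofReal_le_ofReal h2) ?_
          exact (ENNReal.ofReal_tsum_of_nonneg (fun l => mul_nonneg (offDiag_nonneg hq i l)
            (by by_cases hj : k ≤ j <;> simp [hj, hP.1 s l j hs0]))
            (col_summable hq hP hs0 i k j)).le
      _ = ∑' l, ∑' j, ENNReal.ofReal (offDiag q i l * (if k ≤ j then P s l j else 0)) :=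
          ENNReal.tsum_comm
      _ ≤ ∑' l, ENNReal.ofReal (offDiag q i l) := by
          refine ENNReal.tsum_le_tsum fun l => ?_
          have h3 : ∀ j : ℕ, ENNReal.ofReal (offDiag q i l * (if k ≤ j then P s l j else 0))
              = ENNReal.ofReal (offDiag q i l) * ENNReal.ofReal (if k ≤ j then P s l j else 0) :=
            fun j => ENNReal.ofReal_mul (offDiag_nonneg hq i l)
          calc (∑' j, ENNReal.ofReal (offDiag q i l * (if k ≤ j then P s l j else 0)))
              = ENNReal.ofReal (offDiag q i l) *
                  ∑' j, ENNReal.ofReal (if k ≤ j then P s l j else 0) := by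
                rw [tsum_congr h3, ENNReal.tsum_mul_left]
            _ ≤ ENNReal.ofReal (offDiag q i l) * 1 := by
                refine mul_le_mul_right ?_ _
                rw [← ENNReal.ofReal_tsum_of_nonneg
                  (fun j => by by_cases hj : k ≤ j <;> simp [hj, hP.1 s l j hs0])
                  (summable_tail_ite (hP.2.1 s l hs0) (fun j => hP.1 s l j hs0) k)]
                rw [← ENNReal.ofReal_one]
                exact ENNReal.ofReal_le_ofReal (tailSum_P_le_one hP hs0 l k)
            _ = ENNReal.ofReal (offDiag q i l) := mul_one _
      _ = ENNReal.ofReal (∑' l, offDiag q i l) :=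
          (ENNReal.ofReal_tsum_of_nonneg (offDiag_nonneg hq i) (hq.2.2.1 i)).symm
      _ ≤ ENNReal.ofReal (-q i i) := ENNReal.ofReal_le_ofReal (hq.2.2.2 i)
  have hlint : (∑' j, ∫⁻ s in Set.Ioc (0:ℝ) t, (‖F j s‖₊ : ℝ≥0∞) ∂volume) ≠ ⊤ := by
    rw [← lintegral_tsum (f := fun j s => (‖F j s‖₊ : ℝ≥0∞)) (fun j => (hFmeas j).enorm)]
    have hle := setLIntegral_mono' (μ := volume) (g := fun _ => ENNReal.ofReal (-q i i))
      measurableSet_Ioc hbound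
    rw [setLIntegral_const] at hle
    exact ne_top_of_le_ne_top (ENNReal.mul_ne_top ENNReal.ofReal_ne_top measure_Ioc_lt_top.ne) hle
  have hδ1 : (fun j => if k ≤ j then (if i = j then (1:ℝ) else 0) * Real.exp (q i i * t) else 0)
      = fun j => if j = i then (if k ≤ i then (1:ℝ) else 0) * Real.exp (q i i * t) else 0 := by
    funext j
    by_cases hj : j = i
    · subst hj; by_cases hk : k ≤ j <;> simp [hk]
    · have hij : ¬ i = j := fun h => hj h.symm
      by_cases hk : k ≤ j <;> simp [hk, hij, hj]
  have hδsum : Summable (fun j => if k ≤ j then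
      (if i = j then (1:ℝ) else 0) * Real.exp (q i i * t) else 0) := by
    rw [hδ1]; exact (hasSum_ite_eq i _).summable
  set I : ℕ → ℝ := fun j => ∫ s in (0:ℝ)..t,
    Real.exp (q i i * (t - s)) * (∑' l, if l = i then 0 else q i l * P s l j) with hI
  have hIdecomp : (fun j => if k ≤ j then I j else 0) = fun j =>
      (if k ≤ j then P t i j else 0) -
      (if k ≤ j then (if i = j then (1:ℝ) else 0) * Real.exp (q i i * t) else 0) := by
    funext j
    by_cases hj : k ≤ j
    · simp only [if_pos hj]
      have hb := hB t i j ht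
      rw [hI]
      linarith [hb]
    · simp [hj]
  have hsumI : Summable (fun j => if k ≤ j then I j else 0) := by
    rw [hIdecomp]
    exact (summable_tail_ite (hP.2.1 t i ht) (fun j => hP.1 t i j ht) k).sub hδsum
  have hIset : ∀ j, (if k ≤ j then I j else 0) = ∫ s in Set.Ioc (0:ℝ) t, F j s := by
    intro j
    have h1 : I j = ∫ s in Set.Ioc (0:ℝ) t,
        Real.exp (q i i * (t - s)) * (∑' l, offDiag q i l * P s l j) := by
      rw [hI]
      simp only []
      rw [intervalIntegral.integral_of_le ht]
      refine setIntegral_congr_fun measurableSet_Ioc fun s hs => ?_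
      rw [step0 s j]
    by_cases hj : k ≤ j
    · rw [if_pos hj, h1]
      refine setIntegral_congr_fun measurableSet_Ioc fun s hs => ?_
      rw [hFval, if_pos hj, one_mul]
    · rw [if_neg hj]
      have : ∀ s ∈ Set.Ioc (0:ℝ) t, F j s = 0 := by
        intro s hs; rw [hFval, if_neg hj, zero_mul]
      rw [setIntegral_congr_fun measurableSet_Ioc this]
      simp
  have hmain : tailSum (P t i) k =
      (∑' j, if k ≤ j then (if i = j then (1:ℝ) else 0) * Real.exp (q i i * t) else 0) +
      (∑' j, if k ≤ j then I j else 0) := by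
    rw [tailSum, ← Summable.tsum_add hδsum hsumI]
    refine tsum_congr fun j => ?_
    by_cases hj : k ≤ j
    · simp only [if_pos hj]
      rw [hI]
      exact hB t i j ht
    · simp [hj]
  rw [hmain]
  congr 1
  · rw [hδ1, tsum_ite_eq]
  · rw [tsum_congr hIset, ← integral_tsum hFmeas hlint]
    refine setIntegral_congr_fun measurableSet_Ioc fun s hs => ?_
    have hs0 : (0:ℝ) ≤ s := hs.1.le
    calc (∑' j, F j s)
        = ∑' j, Real.exp (q i i * (t - s)) *
            (if k ≤ j then (∑' l, offDiag q i l * P s l j) else 0) := by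
          refine tsum_congr fun j => ?_
          rw [hFval]
          by_cases hj : k ≤ j <;> simp [hj] <;> ring
      _ = Real.exp (q i i * (t - s)) *
            ∑' j, (if k ≤ j then (∑' l, offDiag q i l * P s l j) else 0) := tsum_mul_left
      _ = Real.exp (q i i * (t - s)) * Gfun q P i k s := by rw [swap_eq hq hP hs0 i k]

end Helpers4

section Helpers5

open MeasureTheory
open scoped ENNReal

variable {q : ℕ → ℕ → ℝ} {P : ℝ → ℕ → ℕ → ℝ}

lemma lim_exp_slope (a : ℝ) :
    Filter.Tendsto (fun t : ℝ => (Real.exp (a * t) - 1) / t) (𝓝[>] (0:ℝ)) (𝓝 a) := by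
  have h1 : HasDerivAt (fun t : ℝ => Real.exp (a * t)) a 0 := by
    have h0 : HasDerivAt (fun t : ℝ => a * t) a 0 := by
      simpa using (hasDerivAt_id (0:ℝ)).const_mul a
    simpa using h0.exp
  have h2 := hasDerivAt_iff_tendsto_slope.mp h1
  have h3 : 𝓝[>] (0:ℝ) ≤ 𝓝[≠] (0:ℝ) :=
    nhdsWithin_mono 0 fun x hx => by
      simp only [Set.mem_compl_iff, Set.mem_singleton_iff]
      exact ne_of_gt hx
  refine (h2.mono_left h3).congr fun t => ?_
  rw [slope_def_field]
  simp [Real.exp_zero]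

lemma lim_avg (hq : IsQMatrix q) (hP : IsTransitionFunction P) (hB : BackwardEq q P)
    (i k : ℕ) :
    Filter.Tendsto
      (fun t => (∫ s in Set.Ioc (0:ℝ) t, Real.exp (q i i * (t - s)) * Gfun q P i k s) / t)
      (𝓝[>] (0:ℝ)) (𝓝 (Gfun q P i k 0)) := by
  rw [Metric.tendsto_nhdsWithin_nhds]
  intro ε hε
  have hGc : ContinuousWithinAt (Gfun q P i k) (Set.Ici 0) 0 :=
    (G_contOn hq hP hB i k) 0 Set.self_mem_Ici
  rw [Metric.continuousWithinAt_iff] at hGc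
  obtain ⟨δ1, hδ1, hG⟩ := hGc (ε/2) (half_pos hε)
  set C := -q i i with hCdef
  have hC0 : 0 ≤ C := neg_nonneg.mpr (hq.2.1 i)
  refine ⟨min δ1 (ε/(2*(C*C+1))), lt_min hδ1 (by positivity), ?_⟩
  intro t ht hdist
  have ht' : (0:ℝ) < t := ht
  rw [Real.dist_eq, sub_zero, abs_of_pos ht'] at hdist
  have htδ1 : t < δ1 := lt_of_lt_of_le hdist (min_le_left _ _)
  have htδ2 : t < ε/(2*(C*C+1)) := lt_of_lt_of_le hdist (min_le_right _ _)
  have hpt : ∀ s ∈ Set.Ioc (0:ℝ) t,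
      ‖Real.exp (q i i * (t - s)) * Gfun q P i k s - Gfun q P i k 0‖ ≤ C*C*t + ε/2 := by
    intro s hs
    have hs0 : (0:ℝ) ≤ s := hs.1.le
    have hG1 : 0 ≤ Gfun q P i k s := G_nonneg hq hP hs0 i k
    have hG2 : Gfun q P i k s ≤ C := G_le hq hP hs0 i k
    have hE0 : Real.exp (q i i * (t - s)) ≤ 1 := by
      rw [Real.exp_le_one_iff]
      exact mul_nonpos_of_nonpos_of_nonneg (hq.2.1 i) (by linarith [hs.2])
    have hEpos : 0 < Real.exp (q i i * (t - s)) := Real.exp_pos _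
    have hE2 : 1 - Real.exp (q i i * (t - s)) ≤ C * t := by
      have h := Real.add_one_le_exp (q i i * (t - s))
      have h2 : C * (t - s) ≤ C * t := by
        apply mul_le_mul_of_nonneg_left _ hC0
        linarith [hs.1]
      nlinarith [hs.1, hs.2]
    have hGd : |Gfun q P i k s - Gfun q P i k 0| < ε/2 := by
      have hd : dist s (0:ℝ) < δ1 := by
        rw [Real.dist_eq, sub_zero, abs_of_pos hs.1]
        linarith [hs.2]
      have := hG (Set.mem_Ici.mpr hs0) hd
      rwa [Real.dist_eq] at this
    have habs1 : |Real.exp (q i i * (t - s)) * Gfun q P i k s - Gfun q P i k s|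
        ≤ C * t * C := by
      rw [abs_of_nonpos (by nlinarith)]
      nlinarith
    calc ‖Real.exp (q i i * (t - s)) * Gfun q P i k s - Gfun q P i k 0‖
        = |(Real.exp (q i i * (t - s)) * Gfun q P i k s - Gfun q P i k s)
            + (Gfun q P i k s - Gfun q P i k 0)| := by rw [Real.norm_eq_abs]; ring_nf
      _ ≤ |Real.exp (q i i * (t - s)) * Gfun q P i k s - Gfun q P i k s|
            + |Gfun q P i k s - Gfun q P i k 0| := abs_add_le _ _
      _ ≤ C*t*C + ε/2 := add_le_add habs1 hGd.le
      _ = C*C*t + ε/2 := by ring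
  have hbnd : ‖∫ s in Set.Ioc (0:ℝ) t,
      (Real.exp (q i i * (t - s)) * Gfun q P i k s - Gfun q P i k 0)‖
      ≤ (C*C*t + ε/2) * t := by
    have h := norm_setIntegral_le_of_norm_le_const (μ := volume)
      measure_Ioc_lt_top hpt
    rwa [Real.volume_real_Ioc_of_le ht'.le, sub_zero] at h
  have hint : IntegrableOn (fun s => Real.exp (q i i * (t - s)) * Gfun q P i k s)
      (Set.Ioc 0 t) volume := by
    apply (ContinuousOn.integrableOn_compact isCompact_Icc ?_).mono_set Set.Ioc_subset_Icc_self
    exact ((Real.continuous_exp.comp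
      (continuous_const.mul (continuous_const.sub continuous_id))).continuousOn).mul
      ((G_contOn hq hP hB i k).mono (Set.Icc_subset_Ici_self))
  have hconst : IntegrableOn (fun _ : ℝ => Gfun q P i k 0) (Set.Ioc 0 t) volume :=
    integrableOn_const measure_Ioc_lt_top.ne
  have hsub : (∫ s in Set.Ioc (0:ℝ) t, Real.exp (q i i * (t - s)) * Gfun q P i k s)
      - t * Gfun q P i k 0
      = ∫ s in Set.Ioc (0:ℝ) t,
          (Real.exp (q i i * (t - s)) * Gfun q P i k s - Gfun q P i k 0) := by
    rw [integral_sub hint hconst]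
    congr 1
    rw [setIntegral_const, Real.volume_real_Ioc_of_le ht'.le,
      smul_eq_mul, sub_zero]
  rw [Real.dist_eq]
  have heq : (∫ s in Set.Ioc (0:ℝ) t, Real.exp (q i i * (t - s)) * Gfun q P i k s) / t
      - Gfun q P i k 0
      = ((∫ s in Set.Ioc (0:ℝ) t, Real.exp (q i i * (t - s)) * Gfun q P i k s)
          - t * Gfun q P i k 0) / t := by
    field_simp
  rw [heq, hsub, abs_div, abs_of_pos ht']
  rw [Real.norm_eq_abs] at hbnd
  have harith : C*C*t + ε/2 < ε := by
    have h1 : (C*C+1)*t < (C*C+1)*(ε/(2*(C*C+1))) :=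
      mul_lt_mul_of_pos_left htδ2 (by positivity)
    have h2 : (C*C+1)*(ε/(2*(C*C+1))) = ε/2 := by
      field_simp
    nlinarith
  calc |∫ s in Set.Ioc (0:ℝ) t,
        (Real.exp (q i i * (t - s)) * Gfun q P i k s - Gfun q P i k 0)| / t
      ≤ ((C*C*t + ε/2) * t) / t := by
        apply (div_le_div_iff_of_pos_right ht').mpr hbnd
      _ = C*C*t + ε/2 := by field_simp
      _ < ε := harith

lemma key_limit (hq : IsQMatrix q) (hP : IsTransitionFunction P) (hB : BackwardEq q P)
    (i k : ℕ) :
    Filter.Tendsto (fun t => (tailSum (P t i) k - (if k ≤ i then (1:ℝ) else 0)) / t)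
      (𝓝[>] (0:ℝ)) (𝓝 (tailSum (q i) k)) := by
  have hval : tailSum (q i) k = (if k ≤ i then (1:ℝ) else 0) * q i i + Gfun q P i k 0 := by
    rw [tailSum_q hq i k, G_zero hq hP i k]
  rw [hval]
  have l1 := (lim_exp_slope (q i i)).const_mul (if k ≤ i then (1:ℝ) else 0)
  have l2 := lim_avg hq hP hB i k
  have l3 := l1.add l2
  refine Filter.Tendsto.congr' ?_ l3
  filter_upwards [self_mem_nhdsWithin] with t ht
  have ht' : (0:ℝ) < t := ht
  rw [tail_ident hq hP hB i k ht'.le]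
  have ht0 : t ≠ 0 := ne_of_gt ht'
  generalize (if k ≤ i then (1:ℝ) else 0) = d
  field_simp
  ring

end Helpers5


/-- condition (1.1) for the transition functions implies condition (1.2)
for the corresponding Q-matrices. -/
theorem statement1 (q1 q2 : ℕ → ℕ → ℝ) (hq1 : IsQMatrix q1) (hq2 : IsQMatrix q2)
    (P1 P2 : ℝ → ℕ → ℕ → ℝ)
    (hP1 : IsTransitionFunction P1) (hP1q : BackwardEq q1 P1)
    (hP2 : IsTransitionFunction P2) (hP2q : BackwardEq q2 P2)
    (h11 : Cond11 P1 P2) :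
    Cond12 q1 q2 := by
  intro i m him k hk
  have hδ : (if k ≤ i then (1:ℝ) else 0) = (if k ≤ m then (1:ℝ) else 0) := by
    rcases hk with hk | hk
    · rw [if_pos hk, if_pos (hk.trans him)]
    · rw [if_neg (by omega), if_neg (by omega)]
  have h1 := key_limit hq1 hP1 hP1q i k
  have h2 := key_limit hq2 hP2 hP2q m k
  refine le_of_tendsto_of_tendsto h1 h2 ?_
  filter_upwards [self_mem_nhdsWithin] with t ht
  have ht' : (0:ℝ) < t := ht
  have hcmp := h11 t ht'.le k i m him
  exact (div_le_div_iff_of_pos_right ht').mpr (by linarith [hδ.le, hδ.ge])
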